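/- If a bounded sesquilinear form a(·,·) on a Hilbert space X is T-coercive, i.e., there exists an isomorphism T : X → X and c > 0 such that |a(u, Tu)| ≥ c‖u‖² for all u ∈ X, then the bounded operator A : X → X representing a via a(u,φ) = (Au, φ)_X is continuously invertible. -/

import Mathlib

open scoped InnerProductSpace

/-- if a bounded sesquilinear form `a` on a complex Hilbert space `X` is
`T`-coercive (there is an isomorphism `T : X → X` and `c > 0` with `|a(u,Tu)| ≥ c‖u‖²`),
then the bounded operator `A` representing `a` via `a(u,φ) = (Au,φ)_X` is continuously
invertible. -/
theorem T_coercive_implies_invertible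
    {X : Type*} [NormedAddCommGroup X] [InnerProductSpace ℂ X] [CompleteSpace X]
    (a : X → X → ℂ) (A : X →L[ℂ] X)
    (hrep : ∀ u φ : X, a u φ = ⟪A u, φ⟫_ℂ)
    (T : X ≃L[ℂ] X) (c : ℝ) (hc : 0 < c)
    (hcoer : ∀ u : X, c * ‖u‖ ^ 2 ≤ ‖a u (T u)‖) :
    ∃ e : X ≃L[ℂ] X, (e : X →L[ℂ] X) = A := by
  -- lower bound: ‖u‖ ≤ (‖T‖/c) * ‖A u‖
  have hbound : ∀ u : X, ‖u‖ ≤ (‖(T : X →L[ℂ] X)‖ / c) * ‖A u‖ := by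
    intro u
    rcases eq_or_ne u 0 with rfl | hu
    · simp
    · have h1 : c * ‖u‖ ^ 2 ≤ ‖A u‖ * ‖T u‖ := by
        calc c * ‖u‖ ^ 2 ≤ ‖a u (T u)‖ := hcoer u
          _ = ‖⟪A u, T u⟫_ℂ‖ := by rw [hrep]
          _ ≤ ‖A u‖ * ‖T u‖ := norm_inner_le_norm _ _
      have h2 : ‖T u‖ ≤ ‖(T : X →L[ℂ] X)‖ * ‖u‖ := (T : X →L[ℂ] X).le_opNorm u
      have hu' : 0 < ‖u‖ := norm_pos_iff.mpr hu
      have h3 : c * ‖u‖ ^ 2 ≤ ‖A u‖ * (‖(T : X →L[ℂ] X)‖ * ‖u‖) :=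
        h1.trans (by gcongr)
      rw [div_mul_eq_mul_div, le_div_iff₀ hc]
      nlinarith [norm_nonneg (A u)]
  -- injective
  have hker : LinearMap.ker (A : X →ₗ[ℂ] X) = ⊥ := by
    rw [LinearMap.ker_eq_bot']
    intro u hu
    have := hbound u
    rw [show A u = 0 from hu] at this
    simp at this
    exact this
  -- antilipschitz, so range is closed
  have hanti : AntilipschitzWith (‖(T : X →L[ℂ] X)‖ / c).toNNReal A := by
    apply ContinuousLinearMap.antilipschitz_of_bound
    intro x
    simpa [Real.coe_toNNReal _ (by positivity : (0:ℝ) ≤ ‖(T : X →L[ℂ] X)‖ / c)] using hbound x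
  have hclosed : IsClosed (Set.range A) :=
    hanti.isClosed_range A.uniformContinuous
  have hclosed' : IsClosed ((LinearMap.range (A : X →ₗ[ℂ] X) : Submodule ℂ X) : Set X) := by
    simpa [LinearMap.coe_range] using hclosed
  haveI : CompleteSpace (LinearMap.range (A : X →ₗ[ℂ] X)) := hclosed'.completeSpace_coe
  haveI : Submodule.HasOrthogonalProjection (LinearMap.range (A : X →ₗ[ℂ] X)) :=
    Submodule.HasOrthogonalProjection.ofCompleteSpace _
  -- orthogonal complement of range is trivial
  have horth : (LinearMap.range (A : X →ₗ[ℂ] X))ᗮ = ⊥ := by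
    rw [Submodule.eq_bot_iff]
    intro φ hφ
    have hz : ⟪A (T.symm φ), φ⟫_ℂ = 0 :=
      (Submodule.mem_orthogonal _ _).mp hφ _ ⟨T.symm φ, rfl⟩
    have := hcoer (T.symm φ)
    rw [hrep, T.apply_symm_apply, hz] at this
    simp at this
    have : T.symm φ = 0 := by
      by_contra h
      have hx : 0 < ‖T.symm φ‖ := norm_pos_iff.mpr h
      nlinarith [mul_pos hc (mul_pos hx hx)]
    have := congrArg T this
    simpa using this
  have hrange : LinearMap.range (A : X →ₗ[ℂ] X) = ⊤ := by
    have := Submodule.orthogonal_eq_bot_iff (K := LinearMap.range (A : X →ₗ[ℂ] X))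
    exact this.mp horth
  exact ⟨ContinuousLinearEquiv.ofBijective A hker hrange, rfl⟩
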